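/- Let Q : ℝ^d → [0,∞) be measurable with ∫ Q^p < ∞, let p ≥ 1 be an integer, and define Q_M(λ) = Q((2π/M)⌊(M/2π)λ⌋) (componentwise floor). If Q is uniformly continuous and Q_M → Q uniformly on ℝ^d as M → ∞, then limsup_{M→∞} sup_{‖g‖₂=1} ∫_{|λ|≤a} [∫_{ℝ^d} √(Q_M(λ+γ))√(Q_M(γ)) g(λ+γ)g(γ) dγ]^p dλ ≤ sup_{‖g‖₂=1} ∫_{|λ|≤a} [∫_{ℝ^d} √(Q(λ+γ))√(Q(γ)) g(λ+γ)g(γ) dγ]^p dλ, for every fixed a > 0. -/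

import Mathlib

open MeasureTheory Real Filter

lemma sqrt_add_le' (x y : ℝ) (hx : 0 ≤ x) (hy : 0 ≤ y) :
    Real.sqrt (x + y) ≤ Real.sqrt x + Real.sqrt y := by
  have h : x + y ≤ (Real.sqrt x + Real.sqrt y) ^ 2 := by
    have hx' := Real.sq_sqrt hx
    have hy' := Real.sq_sqrt hy
    have := mul_nonneg (Real.sqrt_nonneg x) (Real.sqrt_nonneg y)
    nlinarith
  calc Real.sqrt (x + y) ≤ Real.sqrt ((Real.sqrt x + Real.sqrt y) ^ 2) :=
        Real.sqrt_le_sqrt h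
    _ = Real.sqrt x + Real.sqrt y := by
        rw [Real.sqrt_sq (by positivity)]

lemma abs_sqrt_sub_sqrt (x y : ℝ) (hx : 0 ≤ x) (hy : 0 ≤ y) :
    |Real.sqrt x - Real.sqrt y| ≤ Real.sqrt |x - y| := by
  rcases le_total y x with h | h
  · rw [abs_of_nonneg (by simpa using Real.sqrt_le_sqrt h), abs_of_nonneg (by linarith)]
    have : Real.sqrt x ≤ Real.sqrt y + Real.sqrt (x - y) := by
      calc Real.sqrt x = Real.sqrt (y + (x - y)) := by ring_nf
        _ ≤ _ := sqrt_add_le' _ _ hy (by linarith)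
    linarith
  · rw [abs_of_nonpos (by simpa using Real.sqrt_le_sqrt h), abs_of_nonpos (by linarith),
      neg_sub, neg_sub]
    have : Real.sqrt y ≤ Real.sqrt x + Real.sqrt (y - x) := by
      calc Real.sqrt y = Real.sqrt (x + (y - x)) := by ring_nf
        _ ≤ _ := sqrt_add_le' _ _ hx (by linarith)
    linarith

lemma abs_pow_sub_pow_le' (B : ℝ) (hB : 1 ≤ B) :
    ∀ (n : ℕ) (x y : ℝ), |x| ≤ B → |y| ≤ B → |x ^ n - y ^ n| ≤ n * B ^ n * |x - y| := by
  intro n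
  induction n with
  | zero => intro x y _ _; simp
  | succ n ih =>
    intro x y hx hy
    have h1 : x ^ (n+1) - y ^ (n+1) = x * (x ^ n - y ^ n) + (x - y) * y ^ n := by ring
    have h2 : |x ^ (n+1) - y ^ (n+1)| ≤ |x| * |x ^ n - y ^ n| + |x - y| * |y| ^ n := by
      rw [h1]
      calc _ ≤ |x * (x ^ n - y ^ n)| + |(x - y) * y ^ n| := abs_add_le _ _
        _ = _ := by rw [abs_mul, abs_mul, abs_pow]
    have h3 := ih x y hx hy
    have hBn : (0:ℝ) < B ^ n := by positivity
    have hyn : |y| ^ n ≤ B ^ n := pow_le_pow_left₀ (abs_nonneg y) hy n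
    have habs : (0:ℝ) ≤ |x - y| := abs_nonneg _
    have hxn : (0:ℝ) ≤ |x ^ n - y ^ n| := abs_nonneg _
    have hx0 : (0:ℝ) ≤ |x| := abs_nonneg _
    calc |x ^ (n+1) - y ^ (n+1)| ≤ |x| * |x ^ n - y ^ n| + |x - y| * |y| ^ n := h2
      _ ≤ B * (n * B ^ n * |x - y|) + |x - y| * B ^ n := by
          gcongr
      _ ≤ (n + 1) * B ^ (n+1) * |x - y| := by
          rw [pow_succ]
          push_cast
          nlinarith [mul_nonneg habs hBn.le]
      _ = (↑(n+1) : ℝ) * B ^ (n+1) * |x - y| := by push_cast; ring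

lemma Q_bounded {d p : ℕ} (hd : 0 < d) (hp : 1 ≤ p)
    (Q : EuclideanSpace ℝ (Fin d) → ℝ) (hQ0 : ∀ l, 0 ≤ Q l)
    (hQint : Integrable fun l => Q l ^ p) (hQuc : UniformContinuous Q) :
    ∃ C : ℝ, 0 ≤ C ∧ ∀ l, Q l ≤ C := by
  by_contra h
  push_neg at h
  obtain ⟨δ, hδ, hδ'⟩ := Metric.uniformContinuous_iff.mp hQuc 1 one_pos
  have hvpos : 0 < volume (Metric.ball (0 : EuclideanSpace ℝ (Fin d)) δ) := Metric.measure_ball_pos _ _ hδ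
  have hvfin : volume (Metric.ball (0 : EuclideanSpace ℝ (Fin d)) δ) < ⊤ := measure_ball_lt_top
  set v := (volume (Metric.ball (0 : EuclideanSpace ℝ (Fin d)) δ)).toReal with hv
  have hv0 : 0 < v := ENNReal.toReal_pos hvpos.ne' hvfin.ne
  set Itot := ∫ l, Q l ^ p with hI
  have hItot : 0 ≤ Itot := integral_nonneg fun l => pow_nonneg (hQ0 l) p
  set t : ℝ := max 1 ((Itot + v) / v) with ht
  have ht1 : (1:ℝ) ≤ t := le_max_left _ _
  have htp : Itot < t ^ p * v := by
    have h1 : t ≤ t ^ p := le_self_pow₀ (by linarith) (by omega)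
    have h2 : (Itot + v) / v ≤ t := le_max_right _ _
    have : Itot + v ≤ t * v := by
      rw [div_le_iff₀ hv0] at h2; linarith
    nlinarith
  obtain ⟨x, hx⟩ := h (t + 1) (by linarith)
  have hball : ∀ y ∈ Metric.ball x δ, t ≤ Q y := by
    intro y hy
    have := hδ' (show dist y x < δ from Metric.mem_ball.mp hy)
    have := abs_lt.mp (by simpa [Real.dist_eq] using this)
    linarith [this.1, this.2]
  have hmb : MeasurableSet (Metric.ball x δ) := measurableSet_ball
  have hvb : volume (Metric.ball x δ) = volume (Metric.ball (0 : EuclideanSpace ℝ (Fin d)) δ) :=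
    Measure.addHaar_ball_center volume x δ
  have h1 : ∫ y in Metric.ball x δ, (t ^ p : ℝ) ≤ ∫ y in Metric.ball x δ, Q y ^ p := by
    apply setIntegral_mono_on
    · exact (integrableOn_const_iff).mpr (Or.inr (by rw [hvb]; exact hvfin))
    · exact hQint.integrableOn
    · exact hmb
    · intro y hy
      exact pow_le_pow_left₀ (by linarith) (hball y hy) p
  have h2 : ∫ y in Metric.ball x δ, Q y ^ p ≤ Itot :=
    setIntegral_le_integral hQint (Eventually.of_forall fun l => pow_nonneg (hQ0 l) p)
  rw [setIntegral_const, measureReal_def, hvb] at h1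
  rw [smul_eq_mul, ← hv] at h1
  nlinarith

section
variable {d : ℕ}

local notation "E" => EuclideanSpace ℝ (Fin d)

lemma gg_int (g : E → ℝ) (hgm : StronglyMeasurable g) (hg2 : MemLp g 2 (volume : Measure E))
    (l : E) : Integrable (fun γ : E => |g (l + γ) * g γ|) := by
  have hg2l : MemLp (fun γ : E => g (l + γ)) 2 volume :=
    hg2.comp_measurePreserving (measurePreserving_add_left volume l)
  have int1 : Integrable (fun γ : E => g (l + γ) ^ 2) := hg2l.integrable_sq
  have int2 : Integrable (fun γ : E => g γ ^ 2) := hg2.integrable_sq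
  have meas : Measurable fun γ : E => |g (l + γ) * g γ| :=
    ((hgm.measurable.comp (measurable_const_add l)).mul hgm.measurable).abs
  refine ((int1.add int2).div_const 2).mono' meas.aestronglyMeasurable (ae_of_all _ fun γ => ?_)
  rw [Real.norm_eq_abs, abs_abs, abs_mul]
  simp only [Pi.add_apply]
  nlinarith [sq_nonneg (|g (l + γ)| - |g γ|), sq_abs (g (l + γ)), sq_abs (g γ),
    abs_nonneg (g (l + γ)), abs_nonneg (g γ)]

lemma gg_le_one (g : E → ℝ) (hgm : StronglyMeasurable g) (hg2 : MemLp g 2 (volume : Measure E))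
    (hgn : (∫ x, g x ^ 2) = 1) (l : E) : (∫ γ : E, |g (l + γ) * g γ|) ≤ 1 := by
  have hg2l : MemLp (fun γ : E => g (l + γ)) 2 volume :=
    hg2.comp_measurePreserving (measurePreserving_add_left volume l)
  have int1 : Integrable (fun γ : E => g (l + γ) ^ 2) := hg2l.integrable_sq
  have int2 : Integrable (fun γ : E => g γ ^ 2) := hg2.integrable_sq
  have h1 : (∫ γ : E, |g (l + γ) * g γ|) ≤ ∫ γ : E, (g (l + γ) ^ 2 + g γ ^ 2) / 2 := by
    refine integral_mono_of_nonneg (ae_of_all _ fun γ => abs_nonneg _)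
      ((int1.add int2).div_const 2) (ae_of_all _ fun γ => ?_)
    simp only [abs_mul]
    nlinarith [sq_nonneg (|g (l + γ)| - |g γ|), sq_abs (g (l + γ)), sq_abs (g γ),
      abs_nonneg (g (l + γ)), abs_nonneg (g γ)]
  have h2 : (∫ γ : E, (g (l + γ) ^ 2 + g γ ^ 2) / 2) = 1 := by
    rw [integral_div, integral_add int1 int2]
    rw [integral_add_left_eq_self (fun x : E => g x ^ 2) l, hgn]
    norm_num
  linarith

lemma sqrtR_int (B : ℝ) (hB : 0 ≤ B) (R : E → ℝ) (hRm : Measurable R) (hR0 : ∀ x, 0 ≤ R x)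
    (hRB : ∀ x, R x ≤ B) (g : E → ℝ) (hgm : StronglyMeasurable g)
    (hg2 : MemLp g 2 (volume : Measure E)) (l : E) :
    Integrable (fun γ : E => Real.sqrt (R (l + γ)) * Real.sqrt (R γ) * g (l + γ) * g γ) := by
  have meas : Measurable fun γ : E => Real.sqrt (R (l + γ)) * Real.sqrt (R γ) * g (l + γ) * g γ := by
    have m1 : Measurable fun γ : E => Real.sqrt (R (l + γ)) :=
      Real.continuous_sqrt.measurable.comp (hRm.comp (measurable_const_add l))
    have m2 : Measurable fun γ : E => Real.sqrt (R γ) :=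
      Real.continuous_sqrt.measurable.comp hRm
    exact ((m1.mul m2).mul (hgm.measurable.comp (measurable_const_add l))).mul hgm.measurable
  refine ((gg_int g hgm hg2 l).const_mul B).mono' meas.aestronglyMeasurable
    (ae_of_all _ fun γ => ?_)
  have hs1 : Real.sqrt (R (l + γ)) ≤ Real.sqrt B := Real.sqrt_le_sqrt (hRB _)
  have hs2 : Real.sqrt (R γ) ≤ Real.sqrt B := Real.sqrt_le_sqrt (hRB _)
  have hprod : Real.sqrt (R (l + γ)) * Real.sqrt (R γ) ≤ B := by
    calc Real.sqrt (R (l + γ)) * Real.sqrt (R γ) ≤ Real.sqrt B * Real.sqrt B :=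
          mul_le_mul hs1 hs2 (Real.sqrt_nonneg _) (Real.sqrt_nonneg _)
      _ = B := Real.mul_self_sqrt hB
  rw [Real.norm_eq_abs]
  calc |Real.sqrt (R (l + γ)) * Real.sqrt (R γ) * g (l + γ) * g γ|
      = Real.sqrt (R (l + γ)) * Real.sqrt (R γ) * |g (l + γ) * g γ| := by
        rw [mul_assoc, abs_mul, abs_of_nonneg (mul_nonneg (Real.sqrt_nonneg _) (Real.sqrt_nonneg _))]
    _ ≤ B * |g (l + γ) * g γ| :=
        mul_le_mul_of_nonneg_right hprod (abs_nonneg _)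

lemma inner_abs_le (B : ℝ) (hB : 0 ≤ B) (R : E → ℝ) (hRm : Measurable R) (hR0 : ∀ x, 0 ≤ R x)
    (hRB : ∀ x, R x ≤ B) (g : E → ℝ) (hgm : StronglyMeasurable g)
    (hg2 : MemLp g 2 (volume : Measure E)) (hgn : (∫ x, g x ^ 2) = 1) (l : E) :
    |∫ γ : E, Real.sqrt (R (l + γ)) * Real.sqrt (R γ) * g (l + γ) * g γ| ≤ B := by
  have hprodle : ∀ γ : E, ‖Real.sqrt (R (l + γ)) * Real.sqrt (R γ) * g (l + γ) * g γ‖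
      ≤ B * |g (l + γ) * g γ| := by
    intro γ
    have hs1 : Real.sqrt (R (l + γ)) ≤ Real.sqrt B := Real.sqrt_le_sqrt (hRB _)
    have hs2 : Real.sqrt (R γ) ≤ Real.sqrt B := Real.sqrt_le_sqrt (hRB _)
    have hprod : Real.sqrt (R (l + γ)) * Real.sqrt (R γ) ≤ B := by
      calc Real.sqrt (R (l + γ)) * Real.sqrt (R γ) ≤ Real.sqrt B * Real.sqrt B :=
            mul_le_mul hs1 hs2 (Real.sqrt_nonneg _) (Real.sqrt_nonneg _)
        _ = B := Real.mul_self_sqrt hB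
    rw [Real.norm_eq_abs]
    calc |Real.sqrt (R (l + γ)) * Real.sqrt (R γ) * g (l + γ) * g γ|
        = Real.sqrt (R (l + γ)) * Real.sqrt (R γ) * |g (l + γ) * g γ| := by
          rw [mul_assoc, abs_mul,
            abs_of_nonneg (mul_nonneg (Real.sqrt_nonneg _) (Real.sqrt_nonneg _))]
      _ ≤ B * |g (l + γ) * g γ| :=
          mul_le_mul_of_nonneg_right hprod (abs_nonneg _)
  calc |∫ γ : E, Real.sqrt (R (l + γ)) * Real.sqrt (R γ) * g (l + γ) * g γ|
      ≤ ∫ γ : E, ‖Real.sqrt (R (l + γ)) * Real.sqrt (R γ) * g (l + γ) * g γ‖ := by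
        rw [← Real.norm_eq_abs]; exact norm_integral_le_integral_norm _
    _ ≤ ∫ γ : E, B * |g (l + γ) * g γ| :=
        integral_mono_of_nonneg (ae_of_all _ fun γ => norm_nonneg _)
          ((gg_int g hgm hg2 l).const_mul B) (ae_of_all _ fun γ => hprodle γ)
    _ = B * ∫ γ : E, |g (l + γ) * g γ| := integral_const_mul _ _
    _ ≤ B * 1 := mul_le_mul_of_nonneg_left (gg_le_one g hgm hg2 hgn l) hB
    _ = B := mul_one B

lemma inner_diff (B eps : ℝ) (hB : 0 ≤ B) (heps : 0 ≤ eps)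
    (R S : E → ℝ) (hRm : Measurable R) (hR0 : ∀ x, 0 ≤ R x) (hRB : ∀ x, R x ≤ B)
    (hSm : Measurable S) (hS0 : ∀ x, 0 ≤ S x) (hSB : ∀ x, S x ≤ B)
    (hRS : ∀ x, |R x - S x| ≤ eps)
    (g : E → ℝ) (hgm : StronglyMeasurable g)
    (hg2 : MemLp g 2 (volume : Measure E)) (hgn : (∫ x, g x ^ 2) = 1) (l : E) :
    |(∫ γ : E, Real.sqrt (R (l + γ)) * Real.sqrt (R γ) * g (l + γ) * g γ)
      - ∫ γ : E, Real.sqrt (S (l + γ)) * Real.sqrt (S γ) * g (l + γ) * g γ|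
      ≤ 2 * Real.sqrt B * Real.sqrt eps := by
  have hRint := sqrtR_int B hB R hRm hR0 hRB g hgm hg2 l
  have hSint := sqrtR_int B hB S hSm hS0 hSB g hgm hg2 l
  have key : ∀ γ : E,
      ‖Real.sqrt (R (l + γ)) * Real.sqrt (R γ) * g (l + γ) * g γ
        - Real.sqrt (S (l + γ)) * Real.sqrt (S γ) * g (l + γ) * g γ‖
      ≤ (2 * Real.sqrt B * Real.sqrt eps) * |g (l + γ) * g γ| := by
    intro γ
    set a1 := Real.sqrt (R (l + γ)); set b1 := Real.sqrt (R γ)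
    set a2 := Real.sqrt (S (l + γ)); set b2 := Real.sqrt (S γ)
    have ha1B : a1 ≤ Real.sqrt B := Real.sqrt_le_sqrt (hRB _)
    have hb2B : b2 ≤ Real.sqrt B := Real.sqrt_le_sqrt (hSB _)
    have hda : |a1 - a2| ≤ Real.sqrt eps :=
      le_trans (abs_sqrt_sub_sqrt _ _ (hR0 _) (hS0 _))
        (Real.sqrt_le_sqrt (hRS _))
    have hdb : |b1 - b2| ≤ Real.sqrt eps :=
      le_trans (abs_sqrt_sub_sqrt _ _ (hR0 _) (hS0 _))
        (Real.sqrt_le_sqrt (hRS _))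
    have hkey : |a1 * b1 - a2 * b2| ≤ 2 * Real.sqrt B * Real.sqrt eps := by
      have h1 : a1 * b1 - a2 * b2 = a1 * (b1 - b2) + (a1 - a2) * b2 := by ring
      calc |a1 * b1 - a2 * b2| ≤ |a1 * (b1 - b2)| + |(a1 - a2) * b2| := by
            rw [h1]; exact abs_add_le _ _
        _ = |a1| * |b1 - b2| + |a1 - a2| * |b2| := by rw [abs_mul, abs_mul]
        _ ≤ Real.sqrt B * Real.sqrt eps + Real.sqrt eps * Real.sqrt B := by
            have := Real.sqrt_nonneg (R (l + γ))
            have := Real.sqrt_nonneg (S γ)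
            have := abs_nonneg (b1 - b2)
            have := abs_nonneg (a1 - a2)
            rw [abs_of_nonneg (Real.sqrt_nonneg (R (l + γ))),
              abs_of_nonneg (Real.sqrt_nonneg (S γ))]
            have h2 : |b1 - b2| ≤ Real.sqrt eps := hdb
            have h3 : |a1 - a2| ≤ Real.sqrt eps := hda
            have h4 : (0:ℝ) ≤ Real.sqrt eps := Real.sqrt_nonneg _
            have h5 : (0:ℝ) ≤ Real.sqrt B := Real.sqrt_nonneg _
            nlinarith
        _ = 2 * Real.sqrt B * Real.sqrt eps := by ring
    calc ‖a1 * b1 * g (l + γ) * g γ - a2 * b2 * g (l + γ) * g γ‖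
        = |(a1 * b1 - a2 * b2) * (g (l + γ) * g γ)| := by
          rw [Real.norm_eq_abs]; ring_nf
      _ = |a1 * b1 - a2 * b2| * |g (l + γ) * g γ| := abs_mul _ _
      _ ≤ (2 * Real.sqrt B * Real.sqrt eps) * |g (l + γ) * g γ| :=
          mul_le_mul_of_nonneg_right hkey (abs_nonneg _)
  rw [← integral_sub hRint hSint, ← Real.norm_eq_abs]
  calc ‖∫ γ : E, (Real.sqrt (R (l + γ)) * Real.sqrt (R γ) * g (l + γ) * g γ
        - Real.sqrt (S (l + γ)) * Real.sqrt (S γ) * g (l + γ) * g γ)‖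
      ≤ ∫ γ : E, ‖Real.sqrt (R (l + γ)) * Real.sqrt (R γ) * g (l + γ) * g γ
        - Real.sqrt (S (l + γ)) * Real.sqrt (S γ) * g (l + γ) * g γ‖ :=
        norm_integral_le_integral_norm _
    _ ≤ ∫ γ : E, (2 * Real.sqrt B * Real.sqrt eps) * |g (l + γ) * g γ| :=
        integral_mono_of_nonneg (ae_of_all _ fun γ => norm_nonneg _)
          ((gg_int g hgm hg2 l).const_mul _) (ae_of_all _ fun γ => key γ)
    _ = (2 * Real.sqrt B * Real.sqrt eps) * ∫ γ : E, |g (l + γ) * g γ| :=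
        integral_const_mul _ _
    _ ≤ (2 * Real.sqrt B * Real.sqrt eps) * 1 :=
        mul_le_mul_of_nonneg_left (gg_le_one g hgm hg2 hgn l)
          (by positivity)
    _ = 2 * Real.sqrt B * Real.sqrt eps := mul_one _

lemma inner_meas (R : E → ℝ) (hRm : Measurable R) (g : E → ℝ) (hgm : StronglyMeasurable g) :
    StronglyMeasurable fun l : E =>
      ∫ γ : E, Real.sqrt (R (l + γ)) * Real.sqrt (R γ) * g (l + γ) * g γ := by
  have madd : Measurable fun q : E × E => q.1 + q.2 := measurable_fst.add measurable_snd
  have hf : StronglyMeasurable fun q : E × E =>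
      Real.sqrt (R (q.1 + q.2)) * Real.sqrt (R q.2) * g (q.1 + q.2) * g q.2 := by
    refine Measurable.stronglyMeasurable ?_
    exact (((Real.continuous_sqrt.measurable.comp (hRm.comp madd)).mul
      (Real.continuous_sqrt.measurable.comp (hRm.comp measurable_snd))).mul
      (hgm.measurable.comp madd)).mul (hgm.measurable.comp measurable_snd)
  exact hf.integral_prod_right'

end
set_option maxHeartbeats 1000000 in
theorem stmt15 (d p : ℕ) (hd : 0 < d) (hp : 1 ≤ p) (a : ℝ) (ha : 0 < a)
    (Q : EuclideanSpace ℝ (Fin d) → ℝ) (hQ0 : ∀ l, 0 ≤ Q l)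
    (hQint : Integrable fun l => Q l ^ p) (hQuc : UniformContinuous Q)
    (QM : ℝ → EuclideanSpace ℝ (Fin d) → ℝ)
    (hQM : ∀ (M : ℝ) (l : EuclideanSpace ℝ (Fin d)),
      QM M l = Q (WithLp.toLp 2 (fun i => (2 * π / M) * (⌊(M / (2 * π)) * l i⌋ : ℝ))))
    (hconv : TendstoUniformly QM Q atTop) :
    Filter.limsup (fun M : ℝ =>
        ⨆ g : {g : EuclideanSpace ℝ (Fin d) → ℝ // MemLp g 2 ∧ (∫ x, g x ^ 2) = 1},
          ∫ l in {l : EuclideanSpace ℝ (Fin d) | ‖l‖ ≤ a},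
            (∫ γ, Real.sqrt (QM M (l + γ)) * Real.sqrt (QM M γ) * g.1 (l + γ) * g.1 γ) ^ p)
        atTop
      ≤ ⨆ g : {g : EuclideanSpace ℝ (Fin d) → ℝ // MemLp g 2 ∧ (∫ x, g x ^ 2) = 1},
          ∫ l in {l : EuclideanSpace ℝ (Fin d) | ‖l‖ ≤ a},
            (∫ γ, Real.sqrt (Q (l + γ)) * Real.sqrt (Q γ) * g.1 (l + γ) * g.1 γ) ^ p := by
  classical
  set Sa := {l : EuclideanSpace ℝ (Fin d) | ‖l‖ ≤ a} with hSa
  have hSeq : Sa = Metric.closedBall (0 : EuclideanSpace ℝ (Fin d)) a := by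
    ext l; simp [hSa, Metric.mem_closedBall, dist_zero_right]
  have hSm : MeasurableSet Sa := by rw [hSeq]; exact Metric.isClosed_closedBall.measurableSet
  have hSfin : volume Sa < ⊤ := by rw [hSeq]; exact measure_closedBall_lt_top
  set V := (volume Sa).toReal with hV
  have hV0 : 0 ≤ V := ENNReal.toReal_nonneg
  obtain ⟨C, hC0, hCQ⟩ := Q_bounded hd hp Q hQ0 hQint hQuc
  set B := C + 1 with hBdef
  have hB1 : (1:ℝ) ≤ B := by simp [hBdef]; linarith
  have hB0 : (0:ℝ) ≤ B := by linarith
  have hQB : ∀ l, Q l ≤ B := fun l => by have := hCQ l; simp [hBdef]; linarith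
  have hQm : Measurable Q := hQuc.continuous.measurable
  have hQMm : ∀ M : ℝ, Measurable (QM M) := by
    intro M
    have : QM M = Q ∘ (fun l : EuclideanSpace ℝ (Fin d) =>
        (WithLp.toLp 2 (fun i => (2 * π / M) * (⌊(M / (2 * π)) * l i⌋ : ℝ)) :
          EuclideanSpace ℝ (Fin d))) := funext (hQM M)
    rw [this]
    refine hQm.comp ?_
    refine (PiLp.continuous_toLp 2 _).measurable.comp ?_
    refine measurable_pi_lambda _ fun i => ?_
    exact measurable_const.mul
      (measurable_from_top.comp ((measurable_const.mul (PiLp.continuous_apply 2 _ i).measurable).floor))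
  have hQM0 : ∀ (M : ℝ) l, 0 ≤ QM M l := fun M l => by rw [hQM]; exact hQ0 _
  have hQMB : ∀ (M : ℝ) l, QM M l ≤ B := fun M l => by rw [hQM]; exact hQB _
  -- nonempty index type
  have hex : ∃ g : EuclideanSpace ℝ (Fin d) → ℝ, MemLp g 2 ∧ (∫ x, g x ^ 2) = 1 := by
    set s := Metric.closedBall (0 : EuclideanSpace ℝ (Fin d)) 1 with hs
    have ms : MeasurableSet s := Metric.isClosed_closedBall.measurableSet
    have hsf : volume s < ⊤ := measure_closedBall_lt_top
    have hspos : 0 < volume s :=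
      lt_of_lt_of_le (Metric.measure_ball_pos volume 0 one_pos)
        (measure_mono Metric.ball_subset_closedBall)
    set v := (volume s).toReal with hv
    have hv0 : 0 < v := ENNReal.toReal_pos hspos.ne' hsf.ne
    refine ⟨s.indicator fun _ => (Real.sqrt v)⁻¹, memLp_indicator_const 2 ms _ (Or.inr hsf.ne), ?_⟩
    have hsq : ∀ x, (s.indicator (fun _ => (Real.sqrt v)⁻¹) x) ^ 2
        = s.indicator (fun _ => v⁻¹) x := by
      intro x
      by_cases hx : x ∈ s
      · simp only [Set.indicator_of_mem hx]
        rw [inv_pow, Real.sq_sqrt hv0.le]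
      · simp [Set.indicator_of_notMem hx]
    simp_rw [hsq]
    rw [integral_indicator_const _ ms, measureReal_def, smul_eq_mul, ← hv, mul_inv_cancel₀ hv0.ne']
  haveI hne : Nonempty {g : EuclideanSpace ℝ (Fin d) → ℝ // MemLp g 2 ∧ (∫ x, g x ^ 2) = 1} := by
    obtain ⟨g, h1, h2⟩ := hex; exact ⟨⟨g, h1, h2⟩⟩
  -- congruence in g
  have Hcongr : ∀ (R : EuclideanSpace ℝ (Fin d) → ℝ)
      (g g' : EuclideanSpace ℝ (Fin d) → ℝ), g =ᵐ[volume] g' →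
      (∫ l in Sa, (∫ γ, Real.sqrt (R (l + γ)) * Real.sqrt (R γ) * g (l + γ) * g γ) ^ p)
      = ∫ l in Sa, (∫ γ, Real.sqrt (R (l + γ)) * Real.sqrt (R γ) * g' (l + γ) * g' γ) ^ p := by
    intro R g g' hgg'
    have hin : ∀ l, (∫ γ, Real.sqrt (R (l + γ)) * Real.sqrt (R γ) * g (l + γ) * g γ)
        = ∫ γ, Real.sqrt (R (l + γ)) * Real.sqrt (R γ) * g' (l + γ) * g' γ := by
      intro l
      apply integral_congr_ae
      have h1 := (measurePreserving_add_left volume l).quasiMeasurePreserving.ae_eq_comp hgg'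
      filter_upwards [h1, hgg'] with γ e1 e2
      simp only [Function.comp_apply] at e1
      rw [e1, e2]
    simp_rw [hin]
  -- uniform bound on the functionals
  have Hbound : ∀ (R : EuclideanSpace ℝ (Fin d) → ℝ), Measurable R → (∀ x, 0 ≤ R x) →
      (∀ x, R x ≤ B) → ∀ g : EuclideanSpace ℝ (Fin d) → ℝ, MemLp g 2 →
      (∫ x, g x ^ 2) = 1 →
      |∫ l in Sa, (∫ γ, Real.sqrt (R (l + γ)) * Real.sqrt (R γ) * g (l + γ) * g γ) ^ p|
        ≤ B ^ p * V := by
    intro R hRm hR0 hRB g hg hgn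
    set g' := hg.1.mk g with hg'def
    have hgm' : StronglyMeasurable g' := hg.1.stronglyMeasurable_mk
    have hae : g =ᵐ[volume] g' := hg.1.ae_eq_mk
    have hg' : MemLp g' 2 := hg.ae_eq hae
    have hgn' : (∫ x, g' x ^ 2) = 1 := by
      rw [← hgn]; apply integral_congr_ae; filter_upwards [hae] with x hx; rw [hx]
    rw [Hcongr R g g' hae]
    have hb : ∀ l ∈ Sa,
        ‖(∫ γ, Real.sqrt (R (l + γ)) * Real.sqrt (R γ) * g' (l + γ) * g' γ) ^ p‖ ≤ B ^ p := by
      intro l _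
      rw [Real.norm_eq_abs, abs_pow]
      exact pow_le_pow_left₀ (abs_nonneg _)
        (inner_abs_le B hB0 R hRm hR0 hRB g' hgm' hg' hgn' l) p
    have := norm_setIntegral_le_of_norm_le_const hSfin hb
    rw [Real.norm_eq_abs] at this
    exact this
  have hbddQ : BddAbove (Set.range fun g :
      {g : EuclideanSpace ℝ (Fin d) → ℝ // MemLp g 2 ∧ (∫ x, g x ^ 2) = 1} =>
      ∫ l in Sa, (∫ γ, Real.sqrt (Q (l + γ)) * Real.sqrt (Q γ) * g.1 (l + γ) * g.1 γ) ^ p) := by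
    refine ⟨B ^ p * V, ?_⟩
    rintro x ⟨g, rfl⟩
    exact le_trans (le_abs_self _) (Hbound Q hQm hQ0 hQB g.1 g.2.1 g.2.2)
  -- main eventual estimate
  have hmain : ∀ ε : ℝ, 0 < ε → ∀ᶠ M in (atTop : Filter ℝ),
      (⨆ g : {g : EuclideanSpace ℝ (Fin d) → ℝ // MemLp g 2 ∧ (∫ x, g x ^ 2) = 1},
        ∫ l in Sa, (∫ γ, Real.sqrt (QM M (l + γ)) * Real.sqrt (QM M γ) * g.1 (l + γ) * g.1 γ) ^ p)
      ≤ (⨆ g : {g : EuclideanSpace ℝ (Fin d) → ℝ // MemLp g 2 ∧ (∫ x, g x ^ 2) = 1},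
        ∫ l in Sa, (∫ γ, Real.sqrt (Q (l + γ)) * Real.sqrt (Q γ) * g.1 (l + γ) * g.1 γ) ^ p) + ε := by
    intro ε hε
    set D : ℝ := ↑p * B ^ p * (2 * Real.sqrt B) * V + 1 with hDdef
    have hD1 : 0 ≤ D - 1 := by
      have : (0:ℝ) ≤ ↑p * B ^ p * (2 * Real.sqrt B) * V := by positivity
      simp [hDdef]; linarith
    have hD : 0 < D := by linarith
    set ε' : ℝ := min 1 ((ε / D) ^ 2) with hε'def
    have hε'pos : 0 < ε' := lt_min one_pos (by positivity)
    have hsqε : Real.sqrt ε' ≤ ε / D := by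
      have h1 : ε' ≤ (ε / D) ^ 2 := min_le_right _ _
      calc Real.sqrt ε' ≤ Real.sqrt ((ε / D) ^ 2) := Real.sqrt_le_sqrt h1
        _ = ε / D := Real.sqrt_sq (by positivity)
    filter_upwards [Metric.tendstoUniformly_iff.mp hconv ε' hε'pos] with M hM
    have hclose : ∀ l, |QM M l - Q l| ≤ ε' := by
      intro l
      have := hM l
      rw [Real.dist_eq] at this
      rw [abs_sub_comm]
      linarith [le_of_lt this]
    refine ciSup_le fun g => ?_
    set g' := g.2.1.1.mk g.1 with hg'def
    have hgm' : StronglyMeasurable g' := g.2.1.1.stronglyMeasurable_mk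
    have hae : g.1 =ᵐ[volume] g' := g.2.1.1.ae_eq_mk
    have hg' : MemLp g' 2 := g.2.1.ae_eq hae
    have hgn' : (∫ x, g' x ^ 2) = 1 := by
      rw [← g.2.2]; apply integral_congr_ae; filter_upwards [hae] with x hx; rw [hx]
    rw [Hcongr (QM M) g.1 g' hae]
    set IM := fun l : EuclideanSpace ℝ (Fin d) =>
      ∫ γ, Real.sqrt (QM M (l + γ)) * Real.sqrt (QM M γ) * g' (l + γ) * g' γ with hIMdef
    set IQ := fun l : EuclideanSpace ℝ (Fin d) =>
      ∫ γ, Real.sqrt (Q (l + γ)) * Real.sqrt (Q γ) * g' (l + γ) * g' γ with hIQdef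
    have habsM : ∀ l, |IM l| ≤ B :=
      fun l => inner_abs_le B hB0 (QM M) (hQMm M) (hQM0 M) (hQMB M) g' hgm' hg' hgn' l
    have habsQ : ∀ l, |IQ l| ≤ B :=
      fun l => inner_abs_le B hB0 Q hQm hQ0 hQB g' hgm' hg' hgn' l
    have hdiff : ∀ l, |IM l - IQ l| ≤ 2 * Real.sqrt B * Real.sqrt ε' :=
      fun l => inner_diff B ε' hB0 hε'pos.le (QM M) Q (hQMm M) (hQM0 M) (hQMB M)
        hQm hQ0 hQB hclose g' hgm' hg' hgn' l
    set K : ℝ := ↑p * B ^ p * (2 * Real.sqrt B * Real.sqrt ε') with hKdef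
    have hK0 : 0 ≤ K := by positivity
    have hpow : ∀ l, IM l ^ p ≤ IQ l ^ p + K := by
      intro l
      have h1 := abs_pow_sub_pow_le' B hB1 p (IM l) (IQ l) (habsM l) (habsQ l)
      have h2 : (↑p * B ^ p) * |IM l - IQ l| ≤ (↑p * B ^ p) * (2 * Real.sqrt B * Real.sqrt ε') :=
        mul_le_mul_of_nonneg_left (hdiff l) (by positivity)
      have h3 := le_abs_self (IM l ^ p - IQ l ^ p)
      rw [hKdef]
      nlinarith
    have hmeasM : StronglyMeasurable IM := inner_meas (QM M) (hQMm M) g' hgm'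
    have hmeasQ : StronglyMeasurable IQ := inner_meas Q hQm g' hgm'
    have hconstB : IntegrableOn (fun _ : EuclideanSpace ℝ (Fin d) => B ^ p) Sa volume :=
      (integrableOn_const_iff).mpr (Or.inr hSfin)
    have hconstK : IntegrableOn (fun _ : EuclideanSpace ℝ (Fin d) => K) Sa volume :=
      (integrableOn_const_iff).mpr (Or.inr hSfin)
    have hintM : IntegrableOn (fun l => IM l ^ p) Sa volume := by
      refine hconstB.mono'
        ((hmeasM.measurable.pow_const p).aestronglyMeasurable) (ae_of_all _ fun l => ?_)
      rw [Real.norm_eq_abs, abs_pow]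
      exact pow_le_pow_left₀ (abs_nonneg _) (habsM l) p
    have hintQ : IntegrableOn (fun l => IQ l ^ p) Sa volume := by
      refine hconstB.mono'
        ((hmeasQ.measurable.pow_const p).aestronglyMeasurable) (ae_of_all _ fun l => ?_)
      rw [Real.norm_eq_abs, abs_pow]
      exact pow_le_pow_left₀ (abs_nonneg _) (habsQ l) p
    have step1 : (∫ l in Sa, IM l ^ p) ≤ ∫ l in Sa, (IQ l ^ p + K) :=
      setIntegral_mono_on hintM (hintQ.add hconstK) hSm
        (fun l _ => hpow l)
    have step2 : (∫ l in Sa, (IQ l ^ p + K)) = (∫ l in Sa, IQ l ^ p) + V * K := by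
      rw [integral_add hintQ hconstK, setIntegral_const, measureReal_def,
        smul_eq_mul, ← hV]
    have hVK : V * K ≤ ε := by
      have e1 : V * K = (D - 1) * Real.sqrt ε' := by rw [hKdef, hDdef]; ring
      have e2 : (D - 1) * Real.sqrt ε' ≤ (D - 1) * (ε / D) :=
        mul_le_mul_of_nonneg_left hsqε hD1
      have e3 : (D - 1) * (ε / D) ≤ D * (ε / D) :=
        mul_le_mul_of_nonneg_right (by linarith) (by positivity)
      have e4 : D * (ε / D) = ε := mul_div_cancel₀ ε hD.ne'
      rw [e1]; exact le_trans e2 (le_trans e3 (le_of_eq e4))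
    have hfin : (∫ l in Sa, IQ l ^ p)
        ≤ ⨆ g : {g : EuclideanSpace ℝ (Fin d) → ℝ // MemLp g 2 ∧ (∫ x, g x ^ 2) = 1},
          ∫ l in Sa, (∫ γ, Real.sqrt (Q (l + γ)) * Real.sqrt (Q γ) * g.1 (l + γ) * g.1 γ) ^ p := by
      have := Hcongr Q g.1 g' hae
      rw [hIQdef]
      rw [← this]
      exact le_ciSup hbddQ g
    calc (∫ l in Sa, IM l ^ p) ≤ (∫ l in Sa, IQ l ^ p) + V * K := by rw [← step2]; exact step1
      _ ≤ _ + ε := by gcongr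
  -- conclude
  have hlow : ∀ M : ℝ, -(B ^ p * V) ≤
      ⨆ g : {g : EuclideanSpace ℝ (Fin d) → ℝ // MemLp g 2 ∧ (∫ x, g x ^ 2) = 1},
        ∫ l in Sa,
          (∫ γ, Real.sqrt (QM M (l + γ)) * Real.sqrt (QM M γ) * g.1 (l + γ) * g.1 γ) ^ p := by
    intro M
    have hbdd : BddAbove (Set.range fun g :
        {g : EuclideanSpace ℝ (Fin d) → ℝ // MemLp g 2 ∧ (∫ x, g x ^ 2) = 1} =>
        ∫ l in Sa,
          (∫ γ, Real.sqrt (QM M (l + γ)) * Real.sqrt (QM M γ) * g.1 (l + γ) * g.1 γ) ^ p) := by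
      refine ⟨B ^ p * V, ?_⟩
      rintro x ⟨g, rfl⟩
      exact le_trans (le_abs_self _)
        (Hbound (QM M) (hQMm M) (hQM0 M) (hQMB M) g.1 g.2.1 g.2.2)
    obtain ⟨g0⟩ := hne
    have hb := Hbound (QM M) (hQMm M) (hQM0 M) (hQMB M) g0.1 g0.2.1 g0.2.2
    calc -(B ^ p * V)
        ≤ ∫ l in Sa,
            (∫ γ, Real.sqrt (QM M (l + γ)) * Real.sqrt (QM M γ) * g0.1 (l + γ) * g0.1 γ) ^ p := by
          have := neg_abs_le (∫ l in Sa,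
            (∫ γ, Real.sqrt (QM M (l + γ)) * Real.sqrt (QM M γ) * g0.1 (l + γ) * g0.1 γ) ^ p)
          linarith
      _ ≤ _ := le_ciSup hbdd g0
  refine le_of_forall_pos_le_add fun ε hε => ?_
  have hev := hmain ε hε
  exact Filter.limsup_le_of_le
    (Filter.isCoboundedUnder_le_of_le _ (fun M => hlow M)) hev
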